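/- For all integers m and n, with d1 = (n^2+4mn+2m^2)(5n^4+16mn^3+28m^2n^2+32m^3n+20m^4) and d2 = (n^2-2m^2)(5n^4+24mn^3+52m^2n^2+48m^3n+20m^4) as in Parametrization 1, the quantity d1^2 + d2^2 is twice a sum of two squares; specifically d1^2 + d2^2 = 2(y^2 + b^2) where y = 3(n^2-2m^2)(n^2+2mn+2m^2)(n^2+4mn+2m^2) and b = 4(n^2+2mn+2m^2)^3. -/
import Mathlib


theorem stmt_18 (m n d1 d2 y b : ℤ)
    (hd1 : d1 = (n^2+4*m*n+2*m^2)*(5*n^4+16*m*n^3+28*m^2*n^2+32*m^3*n+20*m^4))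
    (hd2 : d2 = (n^2-2*m^2)*(5*n^4+24*m*n^3+52*m^2*n^2+48*m^3*n+20*m^4))
    (hy : y = 3*(n^2-2*m^2)*(n^2+2*m*n+2*m^2)*(n^2+4*m*n+2*m^2))
    (hb : b = 4*(n^2+2*m*n+2*m^2)^3) :
    d1^2 + d2^2 = 2*(y^2 + b^2) := by subst hd1 hd2 hy hb; ring
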